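/- Let (D, 𝒜, ρ) be a probability space, H a separable real Hilbert space, ι : H → L_∞(ρ) an injective continuous linear map, and let T : H → L₂(ρ) be the composition of ι with the canonical embedding of L_∞(ρ) into L₂(ρ). Assume (ψ_k)_{k∈ℕ} is an orthonormal basis of H such that the elements T ψ_k are pairwise orthogonal in L₂(ρ) and the singular values σ_k := ‖T ψ_k‖_{L₂(ρ)} form a nonincreasing sequence. Then for every n ∈ ℕ, for every (possibly adaptive) information map N : H → ℝⁿ whose k-th coordinate is y_k = L_{k,(y₁,…,y_{k−1})}(f) with each L_{k,(y₁,…,y_{k−1})} a continuous linear functional on H depending on the previously computed values, and for every map φ : ℝⁿ → L_∞(ρ), one has sup_{‖f‖_H ≤ 1} ‖ι f − φ(N f)‖_{L_∞(ρ)} ≥ √( Σ_{k=n+1}^{∞} σ_k² ) (the right-hand side being interpreted as +∞ if the series diverges). -/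

import Mathlib

open MeasureTheory

open scoped RealInnerProductSpace ENNReal
set_option maxHeartbeats 1000000

section helpers

variable {E : Type*} [NormedAddCommGroup E] [InnerProductSpace ℝ E]

lemma helper_norm_sq_sum_smul {ι' : Type*} (s : Finset ι') (w : ι' → E)
    (h : ∀ i ∈ s, ∀ j ∈ s, i ≠ j → ⟪w i, w j⟫ = 0) (c : ι' → ℝ) :
    ‖∑ i ∈ s, c i • w i‖ ^ 2 = ∑ i ∈ s, c i ^ 2 * ‖w i‖ ^ 2 := by
  rw [← real_inner_self_eq_norm_sq, sum_inner]
  refine Finset.sum_congr rfl fun i hi => ?_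
  rw [inner_sum, Finset.sum_eq_single i]
  · rw [real_inner_smul_left, real_inner_smul_right, real_inner_self_eq_norm_sq]; ring
  · intro j hj hne
    rw [real_inner_smul_left, real_inner_smul_right, h i hi j hj (Ne.symm hne)]; ring
  · intro h'; exact absurd hi h'

lemma helper_eucl_norm_sq {d : ℕ} (x : EuclideanSpace ℝ (Fin d)) :
    ‖x‖ ^ 2 = ∑ j, x j ^ 2 := by
  rw [← real_inner_self_eq_norm_sq, PiLp.inner_apply]
  simp [sq, RCLike.inner_apply]

lemma helper_rearrange (σ p : ℕ → ℝ) (n m : ℕ)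
    (hσ0 : ∀ k, 0 ≤ σ k) (hσ : ∀ j k, j ≤ k → σ k ≤ σ j)
    (hp0 : ∀ k, 0 ≤ p k) (hp1 : ∀ k, p k ≤ 1)
    (hsum : (m : ℝ) ≤ ∑ k ∈ Finset.range (n + m), p k) :
    ∑ k ∈ Finset.Ico n (n + m), σ k ≤ ∑ k ∈ Finset.range (n + m), σ k * p k := by
  have hsplit : ∑ k ∈ Finset.range (n + m), σ k * p k
      = ∑ k ∈ Finset.range n, σ k * p k + ∑ k ∈ Finset.Ico n (n + m), σ k * p k := by
    rw [Finset.range_eq_Ico, ← Finset.sum_Ico_consecutive _ (Nat.zero_le n) (Nat.le_add_right n m),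
  Finset.range_eq_Ico]
  have h1 : σ n * ∑ k ∈ Finset.range n, p k ≤ ∑ k ∈ Finset.range n, σ k * p k := by
    rw [Finset.mul_sum]
    refine Finset.sum_le_sum fun k hk => ?_
    exact mul_le_mul_of_nonneg_right (hσ k n (Finset.mem_range.mp hk).le) (hp0 k)
  have hsplitp : ∑ k ∈ Finset.range (n + m), p k
      = ∑ k ∈ Finset.range n, p k + ∑ k ∈ Finset.Ico n (n + m), p k := by
    rw [Finset.range_eq_Ico, ← Finset.sum_Ico_consecutive _ (Nat.zero_le n) (Nat.le_add_right n m),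
  Finset.range_eq_Ico]
  have hcard : ((Finset.Ico n (n + m)).card : ℝ) = m := by
    rw [Nat.card_Ico]; simp
  have h2 : ∑ k ∈ Finset.Ico n (n + m), (1 - p k) ≤ ∑ k ∈ Finset.range n, p k := by
    have : ∑ k ∈ Finset.Ico n (n + m), (1 - p k)
        = (m : ℝ) - ∑ k ∈ Finset.Ico n (n + m), p k := by
      rw [Finset.sum_sub_distrib, Finset.sum_const, nsmul_eq_mul, hcard, mul_one]
    rw [this]
    have := hsum
    rw [hsplitp] at this
    linarith
  have h3 : ∑ k ∈ Finset.Ico n (n + m), σ k * (1 - p k)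
      ≤ σ n * ∑ k ∈ Finset.Ico n (n + m), (1 - p k) := by
    rw [Finset.mul_sum]
    refine Finset.sum_le_sum fun k hk => ?_
    exact mul_le_mul_of_nonneg_right (hσ n k (Finset.mem_Ico.mp hk).1) (by linarith [hp1 k])
  have h4 : σ n * ∑ k ∈ Finset.Ico n (n + m), (1 - p k) ≤ σ n * ∑ k ∈ Finset.range n, p k :=
    mul_le_mul_of_nonneg_left h2 (hσ0 n)
  have h5 : ∑ k ∈ Finset.Ico n (n + m), σ k
      = ∑ k ∈ Finset.Ico n (n + m), σ k * (1 - p k) + ∑ k ∈ Finset.Ico n (n + m), σ k * p k := by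
    rw [← Finset.sum_add_distrib]
    refine Finset.sum_congr rfl fun k _ => by ring
  rw [h5, hsplit]
  linarith

lemma helper_ae_le_norm {D : Type*} [MeasurableSpace D] (ρ : Measure D) (f : Lp ℝ ⊤ ρ) :
    ∀ᵐ x ∂ρ, |f x| ≤ ‖f‖ := by
  have h1 := MeasureTheory.enorm_ae_le_eLpNormEssSup (⇑f) ρ
  have h2 : eLpNorm (⇑f) ⊤ ρ ≠ ⊤ := (Lp.eLpNorm_lt_top f).ne
  rw [eLpNorm_exponent_top] at h2
  filter_upwards [h1] with x hx
  have h3 := ENNReal.toReal_mono h2 hx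
  rw [Lp.norm_def, eLpNorm_exponent_top]
  simpa [Real.norm_eq_abs] using h3

lemma helper_coeFn_sum {D : Type*} [MeasurableSpace D] (ρ : Measure D)
    {ι' : Type*} (s : Finset ι') (F : ι' → Lp ℝ 2 ρ) :
    ⇑(∑ j ∈ s, F j) =ᵐ[ρ] fun x => ∑ j ∈ s, F j x := by
  classical
  induction s using Finset.induction_on with
  | empty =>
    filter_upwards [Lp.coeFn_zero ℝ 2 ρ] with x hx
    simpa using hx
  | @insert a s hnot ih =>
    rw [Finset.sum_insert hnot]
    filter_upwards [Lp.coeFn_add (F a) (∑ j ∈ s, F j), ih] with x hx1 hx2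
    rw [hx1, Pi.add_apply, hx2, Finset.sum_insert hnot]

end helpers

theorem stmt8 {D : Type*} [MeasurableSpace D] (ρ : Measure D) [IsProbabilityMeasure ρ]
    {H : Type*} [NormedAddCommGroup H] [InnerProductSpace ℝ H] [CompleteSpace H]
    -- `H` is separable with orthonormal basis `(ψ_k)_{k ∈ ℕ} = b`
    (b : HilbertBasis ℕ ℝ H)
    (ι : H →L[ℝ] Lp ℝ ⊤ ρ) (hι : Function.Injective ι)
    -- `T` is the composition of `ι` with the canonical embedding of `L∞(ρ)` into `L₂(ρ)`
    (T : H →L[ℝ] Lp ℝ 2 ρ)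
    (hT : ∀ f : H, ⇑(T f) =ᵐ[ρ] ⇑(ι f))
    (horth : ∀ j k : ℕ, j ≠ k → @inner ℝ _ _ (T (b j)) (T (b k)) = 0)
    (hmono : Antitone fun k => ‖T (b k)‖)
    (n : ℕ) (hn : 1 ≤ n)
    -- adaptive deterministic information from continuous linear functionals
    (L : (k : Fin n) → (Fin (k : ℕ) → ℝ) → (H →L[ℝ] ℝ))
    (N : H → Fin n → ℝ)
    (hN : ∀ (f : H) (k : Fin n), N f k = L k (fun j => N f (Fin.castLE k.isLt.le j)) f)
    (φ : (Fin n → ℝ) → Lp ℝ ⊤ ρ) :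
    (∑' k : ℕ, if n ≤ k then ENNReal.ofReal (‖T (b k)‖ ^ 2) else 0) ≤
      (⨆ f : {f : H // ‖f‖ ≤ 1}, ENNReal.ofReal ‖ι f.1 - φ (N f.1)‖) ^ 2 := by
  classical
  set S := ⨆ f : {f : H // ‖f‖ ≤ 1}, ENNReal.ofReal ‖ι f.1 - φ (N f.1)‖ with hSdef
  by_cases hStop : S = ⊤
  · rw [hStop]
    simp [pow_two]
  set s : ℝ := S.toReal with hsdef
  have hs0 : 0 ≤ s := ENNReal.toReal_nonneg
  -- N vanishes on the common kernel of the functionals `L i 0`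
  have hN0 : ∀ f : H, (∀ i : Fin n, L i 0 f = 0) → ∀ k : Fin n, N f k = 0 := by
    intro f hf
    have key : ∀ k : ℕ, ∀ hk : k < n, N f ⟨k, hk⟩ = 0 := by
      intro k
      induction k using Nat.strong_induction_on with
      | _ k ih =>
        intro hk
        rw [hN f ⟨k, hk⟩]
        have hz : (fun j => N f (Fin.castLE (Fin.isLt (⟨k, hk⟩ : Fin n)).le j))
            = (0 : Fin k → ℝ) := funext fun j => ih j.1 j.2 _
        rw [hz]
        exact hf ⟨k, hk⟩
    intro k
    have := key k.1 k.2
    simpa using this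
  -- any admissible `f` in that kernel has small `ι f`
  have hbound : ∀ f : H, ‖f‖ ≤ 1 → (∀ i : Fin n, L i 0 f = 0) → ‖ι f‖ ≤ s := by
    intro f hf1 hker
    have hNf : N f = 0 := funext fun k => hN0 f hker k
    have hNnf : N (-f) = 0 := by
      refine funext fun k => hN0 (-f) (fun i => ?_) k
      rw [map_neg, hker i, neg_zero]
    have h1 : ENNReal.ofReal ‖ι f - φ (N f)‖ ≤ S :=
      le_iSup (fun f : {f : H // ‖f‖ ≤ 1} => ENNReal.ofReal ‖ι f.1 - φ (N f.1)‖) ⟨f, hf1⟩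
    have h2 : ENNReal.ofReal ‖ι (-f) - φ (N (-f))‖ ≤ S :=
      le_iSup (fun f : {f : H // ‖f‖ ≤ 1} => ENNReal.ofReal ‖ι f.1 - φ (N f.1)‖)
        ⟨-f, by simpa using hf1⟩
    rw [hNf] at h1
    rw [hNnf] at h2
    have h1' : ‖ι f - φ 0‖ ≤ s := by
      rw [hsdef]
      exact (ENNReal.ofReal_le_iff_le_toReal hStop).mp h1
    have h2' : ‖ι (-f) - φ 0‖ ≤ s := by
      rw [hsdef]
      exact (ENNReal.ofReal_le_iff_le_toReal hStop).mp h2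
    have e1 : (ι f - φ 0) - (ι (-f) - φ 0) = (2 : ℝ) • ι f := by
      rw [map_neg, two_smul]
      abel
    have key : 2 * ‖ι f‖ ≤ 2 * s := by
      calc 2 * ‖ι f‖ = ‖(2 : ℝ) • ι f‖ := by
            rw [norm_smul]; simp
        _ = ‖(ι f - φ 0) - (ι (-f) - φ 0)‖ := by rw [e1]
        _ ≤ ‖ι f - φ 0‖ + ‖ι (-f) - φ 0‖ := norm_sub_le _ _
        _ ≤ s + s := add_le_add h1' h2'
        _ = 2 * s := by ring
    linarith
  -- the main finite-dimensional estimate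
  have main : ∀ m : ℕ,
      (∑ k ∈ Finset.range (n + m), if n ≤ k then ENNReal.ofReal (‖T (b k)‖ ^ 2) else 0)
        ≤ S ^ 2 := by
    intro m
    -- synthesis operator from coefficients
    have hbo : Orthonormal ℝ (fun k : Fin (n + m) => b (k : ℕ)) :=
      b.orthonormal.comp _ Fin.val_injective
    set Φ : EuclideanSpace ℝ (Fin (n + m)) →ₗ[ℝ] H :=
      { toFun := fun c => ∑ k : Fin (n + m), c k • b (k : ℕ)
        map_add' := by intro x y; simp [add_smul, Finset.sum_add_distrib]
        map_smul' := by intro r x; simp [smul_smul, Finset.smul_sum] } with hPhidef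
    have hPhiapply : ∀ c : EuclideanSpace ℝ (Fin (n + m)),
        Φ c = ∑ k : Fin (n + m), c k • b (k : ℕ) := fun c => rfl
    have hPhinormsq : ∀ c : EuclideanSpace ℝ (Fin (n + m)), ‖Φ c‖ ^ 2 = ‖c‖ ^ 2 := by
      intro c
      rw [hPhiapply, helper_norm_sq_sum_smul _ _ (fun i _ j _ hij => hbo.2 hij) c,
        helper_eucl_norm_sq]
      refine Finset.sum_congr rfl fun k _ => ?_
      rw [hbo.1 k]
      ring
    have hPhinorm : ∀ c : EuclideanSpace ℝ (Fin (n + m)), ‖Φ c‖ = ‖c‖ := by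
      intro c
      have := hPhinormsq c
      have h1 : (0:ℝ) ≤ ‖Φ c‖ := norm_nonneg _
      have h2 : (0:ℝ) ≤ ‖c‖ := norm_nonneg _
      nlinarith
    -- the coefficient information map and its kernel
    set A : EuclideanSpace ℝ (Fin (n + m)) →ₗ[ℝ] (Fin n → ℝ) :=
      (LinearMap.pi fun i : Fin n => ((L i 0).toLinearMap)) ∘ₗ Φ with hA
    have hd : m ≤ Module.finrank ℝ (LinearMap.ker A) := by
      have h1 := LinearMap.finrank_range_add_finrank_ker A
      have h2 : Module.finrank ℝ (LinearMap.range A) ≤ n :=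
        le_trans (Submodule.finrank_le _)
          (le_of_eq (by simp [Module.finrank_pi]))
      have h3 : Module.finrank ℝ (EuclideanSpace ℝ (Fin (n + m))) = n + m :=
        finrank_euclideanSpace_fin
      omega
    set d := Module.finrank ℝ (LinearMap.ker A) with hdd
    set e : OrthonormalBasis (Fin d) ℝ (LinearMap.ker A) :=
      stdOrthonormalBasis ℝ (LinearMap.ker A) with he
    set E : Fin d → EuclideanSpace ℝ (Fin (n + m)) := fun j => (e j : _) with hE
    have hEorth : Orthonormal ℝ E := by
      constructor
      · intro j
        have := e.orthonormal.1 j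
        exact this
      · intro j k hjk
        have := e.orthonormal.2 hjk
        simpa [hE, Submodule.coe_inner] using this
    have hEker : ∀ j, A (E j) = 0 := fun j => (LinearMap.mem_ker).mp (e j).2
    -- singular values and weights
    set σ' : ℕ → ℝ := fun k => ‖T (b k)‖ ^ 2 with hsigma
    obtain ⟨p, hp⟩ : ∃ p : ℕ → ℝ,
        p = fun k => if h : k < n + m then ∑ j, (E j ⟨k, h⟩) ^ 2 else 0 := ⟨_, rfl⟩
    have hp0 : ∀ k, 0 ≤ p k := by
      intro k
      simp only [hp]
      split
      · exact Finset.sum_nonneg fun j _ => sq_nonneg _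
      · exact le_refl 0
    have hp1 : ∀ k, p k ≤ 1 := by
      intro k
      simp only [hp]
      split
      · next h =>
        have hb := hEorth.sum_inner_products_le (𝕜 := ℝ)
          (EuclideanSpace.single (⟨k, h⟩ : Fin (n + m)) (1:ℝ)) (s := Finset.univ)
        have hn1 : ‖EuclideanSpace.single (⟨k, h⟩ : Fin (n + m)) (1:ℝ)‖ = 1 := by
          rw [EuclideanSpace.norm_single]
          norm_num
        rw [hn1] at hb
        calc ∑ j, (E j ⟨k, h⟩) ^ 2
            = ∑ j, ‖@inner ℝ _ _ (E j) (EuclideanSpace.single (⟨k, h⟩ : Fin (n + m)) (1:ℝ))‖ ^ 2 := by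
              refine Finset.sum_congr rfl fun j _ => ?_
              rw [EuclideanSpace.inner_single_right]
              simp [Real.norm_eq_abs, sq_abs]
          _ ≤ 1 ^ 2 := hb
          _ = 1 := one_pow 2
      · exact zero_le_one
    have hpsum : (m : ℝ) ≤ ∑ k ∈ Finset.range (n + m), p k := by
      have heq : ∑ k ∈ Finset.range (n + m), p k = (d : ℝ) := by
        rw [← Fin.sum_univ_eq_sum_range]
        have h1 : ∀ k : Fin (n + m), p k.1 = ∑ j, (E j k) ^ 2 := by
          intro k
          simp only [hp]
          rw [dif_pos k.2]
        rw [Finset.sum_congr rfl fun k _ => h1 k, Finset.sum_comm]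
        have h2 : ∀ j : Fin d, ∑ k : Fin (n + m), (E j k) ^ 2 = 1 := by
          intro j
          rw [← helper_eucl_norm_sq, hEorth.1 j, one_pow]
        rw [Finset.sum_congr rfl fun j _ => h2 j]
        simp
      rw [heq]
      exact_mod_cast hd
    -- expansion of ‖T (Φ c)‖²
    have hTnorm : ∀ c : EuclideanSpace ℝ (Fin (n + m)),
        ‖T (Φ c)‖ ^ 2 = ∑ k : Fin (n + m), (c k) ^ 2 * σ' k.1 := by
      intro c
      have h1 : T (Φ c) = ∑ k : Fin (n + m), c k • T (b (k : ℕ)) := by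
        rw [hPhiapply c, map_sum T (fun k : Fin (n + m) => c k • b (k : ℕ)) Finset.univ]
        refine Finset.sum_congr rfl fun k _ => ?_
        exact T.map_smul _ _
      rw [h1, helper_norm_sq_sum_smul _ _
        (fun i _ j _ hij => horth i.1 j.1 (fun hv => hij (Fin.val_injective hv))) c]
    -- the measure-theoretic bound
    have hMain : ∑ j : Fin d, ‖T (Φ (E j))‖ ^ 2 ≤ s ^ 2 := by
      obtain ⟨g, hg⟩ : ∃ g : Fin d → D → ℝ, g = fun j => ⇑(T (Φ (E j))) := ⟨_, rfl⟩
      -- a.e. bound for each coefficient vector in the unit ball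
      have hball : ∀ t : EuclideanSpace ℝ (Fin d), ‖t‖ ≤ 1 →
          ∀ᵐ x ∂ρ, |∑ j, t j * g j x| ≤ s := by
        intro t ht
        obtain ⟨c, hc⟩ : ∃ c : EuclideanSpace ℝ (Fin (n + m)), c = ∑ j, t j • E j := ⟨_, rfl⟩
        have hcnorm : ‖c‖ ≤ 1 := by
          have h2 : ‖c‖ ^ 2 = ‖t‖ ^ 2 := by
            rw [hc, helper_norm_sq_sum_smul _ _ (fun i _ j _ hij => hEorth.2 hij) t,
              helper_eucl_norm_sq]
            refine Finset.sum_congr rfl fun j _ => ?_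
            rw [hEorth.1 j]
            ring
          nlinarith [norm_nonneg c, norm_nonneg t]
        have hcker : ∀ i : Fin n, L i 0 (Φ c) = 0 := by
          intro i
          have hAc : A c = 0 := by
            rw [hc, map_sum]
            refine Finset.sum_eq_zero fun j _ => ?_
            rw [A.map_smul, hEker j, smul_zero]
          have := congrFun hAc i
          simpa [hA] using this
        have hfb : ‖ι (Φ c)‖ ≤ s := hbound (Φ c) (by rw [hPhinorm]; exact hcnorm) hcker
        have h1 : ∀ᵐ x ∂ρ, |(ι (Φ c) : D → ℝ) x| ≤ s :=
          (helper_ae_le_norm ρ (ι (Φ c))).mono fun x hx => hx.trans hfb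
        have h2 : ⇑(T (Φ c)) =ᵐ[ρ] ⇑(ι (Φ c)) := hT _
        have e1 : Φ c = ∑ j, t j • Φ (E j) := by
          rw [hc, map_sum Φ _ Finset.univ]
          exact Finset.sum_congr rfl fun j _ => Φ.map_smul _ _
        have h3 : T (Φ c) = ∑ j, t j • T (Φ (E j)) := by
          rw [e1, map_sum T _ Finset.univ]
          exact Finset.sum_congr rfl fun j _ => T.map_smul _ _
        have h4 := helper_coeFn_sum ρ Finset.univ (fun j => t j • T (Φ (E j)))
        have h5 : ∀ᵐ x ∂ρ, ∀ j : Fin d, (t j • T (Φ (E j))) x = t j * g j x := by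
          rw [MeasureTheory.ae_all_iff]
          intro j
          filter_upwards [Lp.coeFn_smul (t j) (T (Φ (E j)))] with x hx
          rw [hx, Pi.smul_apply, smul_eq_mul, hg]
        filter_upwards [h1, h2, h4, h5] with x hx1 hx2 hx4 hx5
        have hkey : ∑ j, t j * g j x = (ι (Φ c)) x := by
          rw [← hx2, h3, hx4]
          exact Finset.sum_congr rfl fun j _ => (hx5 j).symm
        rw [hkey]
        exact hx1
      -- pass to a countable dense subset of the unit ball
      obtain ⟨C, hCc, hCd⟩ :=
        TopologicalSpace.exists_countable_dense ↥(Metric.closedBall (0 : EuclideanSpace ℝ (Fin d)) 1)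
      have hball' : ∀ᵐ x ∂ρ, ∀ t ∈ C, |∑ j, (t : EuclideanSpace ℝ (Fin d)) j * g j x| ≤ s := by
        rw [MeasureTheory.ae_ball_iff hCc]
        intro t _
        exact hball t.1 (mem_closedBall_zero_iff.mp t.2)
      have hnorm_ae : ∀ᵐ x ∂ρ, ∑ j, (g j x) ^ 2 ≤ s ^ 2 := by
        filter_upwards [hball'] with x hx
        obtain ⟨v, hv⟩ : ∃ v : EuclideanSpace ℝ (Fin d), v = (fun j => g j x) := ⟨WithLp.toLp 2 (fun j => g j x), rfl⟩
        have hvle : ‖v‖ ≤ s := by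
          by_cases hv0 : v = 0
          · rw [hv0]
            simpa using hs0
          · refine le_of_forall_pos_le_add fun ε hε => ?_
            have hvnorm : (0:ℝ) < ‖v‖ := norm_pos_iff.mpr hv0
            obtain ⟨u, hu⟩ : ∃ u : EuclideanSpace ℝ (Fin d), u = ‖v‖⁻¹ • v := ⟨_, rfl⟩
            have humem : u ∈ Metric.closedBall (0 : EuclideanSpace ℝ (Fin d)) 1 := by
              rw [mem_closedBall_zero_iff, hu, norm_smul, norm_inv, norm_norm,
                inv_mul_cancel₀ hvnorm.ne']
            obtain ⟨t, htC, hdist⟩ :=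
              Metric.mem_closure_iff.mp (hCd ⟨u, humem⟩) (ε / ‖v‖) (by positivity)
            have hdist' : ‖u - t.1‖ < ε / ‖v‖ := by
              rw [← dist_eq_norm]
              simpa [Subtype.dist_eq] using hdist
            have hinner_t : |∑ j, t.1 j * g j x| ≤ s := hx t htC
            have hit : (⟪t.1, v⟫ : ℝ) = ∑ j, t.1 j * g j x := by
              rw [PiLp.inner_apply]
              refine Finset.sum_congr rfl fun j _ => ?_
              simp only [hv, RCLike.inner_apply, conj_trivial]
              exact mul_comm _ _
            have huv : (⟪u, v⟫ : ℝ) = ‖v‖ := by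
              rw [hu, real_inner_smul_left, real_inner_self_eq_norm_mul_norm]
              field_simp
            have hsub : |(⟪u - t.1, v⟫ : ℝ)| ≤ ‖u - t.1‖ * ‖v‖ := abs_real_inner_le_norm _ _
            have f1 : (⟪u, v⟫ : ℝ) = ⟪u - t.1, v⟫ + ⟪t.1, v⟫ := by
              rw [inner_sub_left]
              ring
            have f2 : ‖u - t.1‖ * ‖v‖ < (ε / ‖v‖) * ‖v‖ :=
              mul_lt_mul_of_pos_right hdist' hvnorm
            have f3 : (ε / ‖v‖) * ‖v‖ = ε := div_mul_cancel₀ ε hvnorm.ne'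
            have f4 : (⟪t.1, v⟫ : ℝ) ≤ s := by
              rw [hit]
              exact (le_abs_self _).trans hinner_t
            have f5 : (⟪u - t.1, v⟫ : ℝ) ≤ |(⟪u - t.1, v⟫ : ℝ)| := le_abs_self _
            linarith
        have h2 : ‖v‖ ^ 2 ≤ s ^ 2 := by nlinarith [norm_nonneg v]
        calc ∑ j, (g j x) ^ 2 = ∑ j, (v j) ^ 2 := by
              refine Finset.sum_congr rfl fun j _ => ?_
              simp only [hv]
          _ = ‖v‖ ^ 2 := (helper_eucl_norm_sq v).symm
          _ ≤ s ^ 2 := h2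
      -- integrate
      have hint : ∀ j : Fin d, Integrable (fun x => (g j x) ^ 2) ρ := by
        intro j
        rw [hg]
        exact (Lp.memLp (T (Φ (E j)))).integrable_sq
      have hnormint : ∀ j : Fin d, ‖T (Φ (E j))‖ ^ 2 = ∫ x, (g j x) ^ 2 ∂ρ := by
        intro j
        rw [← real_inner_self_eq_norm_sq, L2.inner_def, hg]
        refine integral_congr_ae (Filter.Eventually.of_forall fun x => ?_)
        simp [RCLike.inner_apply, sq]
      calc ∑ j : Fin d, ‖T (Φ (E j))‖ ^ 2 = ∫ x, ∑ j, (g j x) ^ 2 ∂ρ := by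
            rw [integral_finset_sum Finset.univ fun j _ => hint j]
            exact Finset.sum_congr rfl fun j _ => hnormint j
        _ ≤ ∫ _x, s ^ 2 ∂ρ :=
            integral_mono_ae (integrable_finset_sum _ fun j _ => hint j)
              (integrable_const _) hnorm_ae
        _ = s ^ 2 := by simp
    -- rearrangement
    have htrace : ∑ k ∈ Finset.range (n + m), σ' k * p k = ∑ j : Fin d, ‖T (Φ (E j))‖ ^ 2 := by
      rw [← Fin.sum_univ_eq_sum_range (fun k => σ' k * p k)]
      rw [Finset.sum_congr rfl fun j (_ : j ∈ Finset.univ) => hTnorm (E j), Finset.sum_comm]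
      refine Finset.sum_congr rfl fun k _ => ?_
      simp only [hp]
      rw [dif_pos k.2]
      simp only [Fin.eta]
      rw [Finset.mul_sum]
      exact Finset.sum_congr rfl fun j _ => mul_comm _ _
    have hfin : ∑ k ∈ Finset.Ico n (n + m), σ' k ≤ s ^ 2 := by
      refine le_trans (helper_rearrange σ' p n m (fun k => sq_nonneg _)
        (fun j k hjk => by
          rw [hsigma]
          exact pow_le_pow_left₀ (norm_nonneg _) (hmono hjk) 2)
        hp0 hp1 hpsum) ?_
      rw [htrace]
      exact hMain
    -- conclude
    have hsum_ite : (∑ k ∈ Finset.range (n + m), if n ≤ k then ENNReal.ofReal (‖T (b k)‖ ^ 2) else 0)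
        = ENNReal.ofReal (∑ k ∈ Finset.Ico n (n + m), σ' k) := by
      rw [ENNReal.ofReal_sum_of_nonneg fun k _ => sq_nonneg _]
      rw [Finset.range_eq_Ico, ← Finset.sum_Ico_consecutive _ (Nat.zero_le n) (Nat.le_add_right n m)]
      have hz : ∑ k ∈ Finset.Ico 0 n, (if n ≤ k then ENNReal.ofReal (‖T (b k)‖ ^ 2) else 0) = 0 := by
        refine Finset.sum_eq_zero fun k hk => ?_
        rw [if_neg]
        have := (Finset.mem_Ico.mp hk).2
        omega
      rw [hz, zero_add]
      refine Finset.sum_congr rfl fun k hk => ?_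
      rw [if_pos (Finset.mem_Ico.mp hk).1]
    rw [hsum_ite]
    calc ENNReal.ofReal (∑ k ∈ Finset.Ico n (n + m), σ' k)
        ≤ ENNReal.ofReal (s ^ 2) := ENNReal.ofReal_le_ofReal hfin
      _ = (ENNReal.ofReal s) ^ 2 := by rw [ENNReal.ofReal_pow hs0]
      _ = S ^ 2 := by rw [hsdef, ENNReal.ofReal_toReal hStop]
  rw [ENNReal.tsum_eq_iSup_sum]
  refine iSup_le fun t => ?_
  refine le_trans (Finset.sum_le_sum_of_subset fun k hk => Finset.mem_range.mpr ?_)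
    (main (t.sup id + 1))
  have := Finset.le_sup (f := id) hk
  simp only [id] at this
  omega
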